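/- arXiv:1303.1374 — 12 statements merged into one kernel-verified Lean document; each statement's English description precedes it below -/
import Mathlib

section
/- Assume α₁>0>α₂, β₁>0>β₂, β₁>α₁, θ := α₁β₂ − α₂β₁ > 0, and m₁, m₂ > 0. Define σₖ = mₖ/αₖ and τₖ = mₖ/βₖ. Then σ₁+σ₂ ≥ 0 implies τ₁+τ₂ < σ₁+σ₂, and σ₁+σ₂ < 0 implies τ₁+τ₂ < 0. -/
theorem stmt_1 (α₁ α₂ β₁ β₂ m₁ m₂ : ℝ)
    (hα : α₁ > 0 ∧ 0 > α₂) (hβ : β₁ > 0 ∧ 0 > β₂)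
    (hba : β₁ > α₁) (hθ : α₁ * β₂ - α₂ * β₁ > 0)
    (hm₁ : m₁ > 0) (hm₂ : m₂ > 0) :
    (m₁ / α₁ + m₂ / α₂ ≥ 0 → m₁ / β₁ + m₂ / β₂ < m₁ / α₁ + m₂ / α₂) ∧
    (m₁ / α₁ + m₂ / α₂ < 0 → m₁ / β₁ + m₂ / β₂ < 0) := by
  obtain ⟨ha1, ha2⟩ := hα
  obtain ⟨hb1, hb2⟩ := hβ
  have ha2' : α₂ < 0 := ha2
  have hb2' : β₂ < 0 := hb2
  have ha1ne : α₁ ≠ 0 := ne_of_gt ha1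
  have ha2ne : α₂ ≠ 0 := ne_of_lt ha2'
  have hb1ne : β₁ ≠ 0 := ne_of_gt hb1
  have hb2ne : β₂ ≠ 0 := ne_of_lt hb2'
  have keya : m₁ / α₁ + m₂ / α₂ = (m₁ * α₂ + m₂ * α₁) / (α₁ * α₂) := by
    field_simp
  have keyb : m₁ / β₁ + m₂ / β₂ = (m₁ * β₂ + m₂ * β₁) / (β₁ * β₂) := by
    field_simp
  have hda : α₁ * α₂ < 0 := mul_neg_of_pos_of_neg ha1 ha2'
  have hdb : β₁ * β₂ < 0 := mul_neg_of_pos_of_neg hb1 hb2'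
  constructor
  · intro h
    rw [keya] at h ⊢
    rw [keyb]
    have hnum : m₁ * α₂ + m₂ * α₁ ≤ 0 := by
      by_contra hc
      push_neg at hc
      have := div_neg_of_pos_of_neg hc hda
      linarith
    have hdiff : (m₁ * α₂ + m₂ * α₁) / (α₁ * α₂) - (m₁ * β₂ + m₂ * β₁) / (β₁ * β₂)
        = ((m₁ * α₂ + m₂ * α₁) * (β₁ * β₂) - (m₁ * β₂ + m₂ * β₁) * (α₁ * α₂))
          / ((α₁ * α₂) * (β₁ * β₂)) := by
      field_simp
    have hdpos : (α₁ * α₂) * (β₁ * β₂) > 0 := mul_pos_of_neg_of_neg hda hdb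
    have hnpos : (m₁ * α₂ + m₂ * α₁) * (β₁ * β₂) - (m₁ * β₂ + m₂ * β₁) * (α₁ * α₂) > 0 := by
      rcases le_or_gt β₂ α₂ with hcase | hcase
      · nlinarith [mul_pos (mul_pos hm₁ (neg_pos.2 ha2')) hθ,
          mul_nonneg (mul_nonneg (neg_nonneg.2 hnum) (sub_nonneg.2 hcase)) hb1.le]
      · nlinarith [mul_pos (mul_pos hm₂ (mul_pos ha1 hb1)) (sub_pos.2 hcase),
          mul_pos (mul_pos hm₁ (mul_pos (neg_pos.2 ha2') (neg_pos.2 hb2'))) (sub_pos.2 hba)]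
    have := div_pos hnpos hdpos
    linarith [hdiff ▸ this]
  · intro h
    rw [keya] at h
    rw [keyb]
    have hnum : m₁ * α₂ + m₂ * α₁ > 0 := by
      by_contra hc
      push_neg at hc
      rcases lt_or_eq_of_le hc with hc' | hc'
      · have := div_pos_of_neg_of_neg hc' hda
        linarith
      · rw [hc', zero_div] at h; linarith
    apply div_neg_of_pos_of_neg _ hdb
    nlinarith [mul_pos hm₁ hθ, mul_pos hb1 hnum]
end

section
/- Let α₁>0>α₂ and m₁, m₂ > 0, and set σₖ = mₖ/αₖ. If |σ₁+σ₂| < 1 then the numbers p̂₁ = (1 − 2σ₁ + √(1−4σ₁σ₂))/2 and p̂₂ = (1 − 2σ₂ − √(1−4σ₁σ₂))/2 satisfy 0 < p̂₂ < p̂₁ < 1, i.e. they are admissible allele frequencies. -/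
theorem stmt_2 (α₁ α₂ m₁ m₂ : ℝ)
    (hα : α₁ > 0 ∧ 0 > α₂) (hm₁ : m₁ > 0) (hm₂ : m₂ > 0)
    (hσ : |m₁ / α₁ + m₂ / α₂| < 1) :
    0 < (1 - 2 * (m₂ / α₂) - Real.sqrt (1 - 4 * (m₁ / α₁) * (m₂ / α₂))) / 2 ∧
    (1 - 2 * (m₂ / α₂) - Real.sqrt (1 - 4 * (m₁ / α₁) * (m₂ / α₂))) / 2 <
      (1 - 2 * (m₁ / α₁) + Real.sqrt (1 - 4 * (m₁ / α₁) * (m₂ / α₂))) / 2 ∧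
    (1 - 2 * (m₁ / α₁) + Real.sqrt (1 - 4 * (m₁ / α₁) * (m₂ / α₂))) / 2 < 1 := by
  obtain ⟨hα1, hα2⟩ := hα
  set s₁ := m₁ / α₁ with h1
  set s₂ := m₂ / α₂ with h2
  have hs1 : 0 < s₁ := div_pos hm₁ hα1
  have hs2 : s₂ < 0 := div_neg_of_pos_of_neg hm₂ hα2
  have habs := abs_lt.mp hσ
  have hA : Real.sqrt (1 - 4 * s₁ * s₂) < 1 - 2 * s₂ := by
    rw [Real.sqrt_lt' (by nlinarith)]; nlinarith [habs.2]
  have hB : Real.sqrt (1 - 4 * s₁ * s₂) < 1 + 2 * s₁ := by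
    rw [Real.sqrt_lt' (by nlinarith)]; nlinarith [habs.1]
  have hC : s₁ - s₂ < Real.sqrt (1 - 4 * s₁ * s₂) := by
    have h := Real.sq_sqrt (show (0:ℝ) ≤ 1 - 4 * s₁ * s₂ by nlinarith)
    nlinarith [Real.sqrt_nonneg (1 - 4 * s₁ * s₂), habs.1, habs.2, h]
  refine ⟨by nlinarith, by nlinarith, by nlinarith⟩
end

section
/- Assume α₁>0>α₂, β₁>0>β₂, β₁>α₁, θ := α₁β₂−α₂β₁ > 0, m₁,m₂>0, σₖ = mₖ/αₖ, τₖ = mₖ/βₖ. Then the conditions (σ₁+σ₂ > 1 and τ₁+τ₂ < −1) and ((σ₁τ₂−σ₂τ₁)² + (σ₁+τ₁)(σ₂+τ₂) < 0) are incompatible: they cannot both hold. -/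
theorem stmt_5 (α₁ α₂ β₁ β₂ m₁ m₂ : ℝ)
    (hα : α₁ > 0 ∧ 0 > α₂) (hβ : β₁ > 0 ∧ 0 > β₂)
    (hba : β₁ > α₁) (hθ : α₁ * β₂ - α₂ * β₁ > 0)
    (hm₁ : m₁ > 0) (hm₂ : m₂ > 0)
    (σ₁ σ₂ τ₁ τ₂ : ℝ)
    (hσ₁ : σ₁ = m₁ / α₁) (hσ₂ : σ₂ = m₂ / α₂)
    (hτ₁ : τ₁ = m₁ / β₁) (hτ₂ : τ₂ = m₂ / β₂) :
    ¬ ((σ₁ + σ₂ > 1 ∧ τ₁ + τ₂ < -1) ∧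
        (σ₁ * τ₂ - σ₂ * τ₁) ^ 2 + (σ₁ + τ₁) * (σ₂ + τ₂) < 0) := by
  obtain ⟨hα₁, hα₂⟩ := hα
  obtain ⟨hβ₁, hβ₂⟩ := hβ
  rintro ⟨⟨hM₁, hM₂⟩, hF⟩
  have hs1 : σ₁ > 0 := by rw [hσ₁]; positivity
  have ht1 : τ₁ > 0 := by rw [hτ₁]; positivity
  have hs2 : σ₂ < 0 := by rw [hσ₂]; exact div_neg_of_pos_of_neg hm₂ hα₂
  have ht2 : τ₂ < 0 := by rw [hτ₂]; exact div_neg_of_pos_of_neg hm₂ hβ₂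
  -- a = σ₁, b = -σ₂, c = τ₁, d = -τ₂, s = σ₁+σ₂-1 > 0, t = -(τ₁+τ₂)-1 > 0
  have hs : σ₁ + σ₂ - 1 > 0 := by linarith
  have ht : -(τ₁ + τ₂) - 1 > 0 := by linarith
  -- D = σ₂τ₁ - σ₁τ₂ = (b+c+1) + s + t + st + bt + cs
  have hD : σ₂ * τ₁ - σ₁ * τ₂ =
      (-σ₂ + τ₁ + 1) + (σ₁ + σ₂ - 1) + (-(τ₁ + τ₂) - 1)
      + (σ₁ + σ₂ - 1) * (-(τ₁ + τ₂) - 1)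
      + (-σ₂) * (-(τ₁ + τ₂) - 1) + τ₁ * (σ₁ + σ₂ - 1) := by ring
  nlinarith [mul_pos hs ht, mul_pos (neg_pos.mpr hs2) ht, mul_pos ht1 hs,
    sq_nonneg (σ₂ * τ₁ - σ₁ * τ₂), mul_pos hs1 ht1,
    mul_pos (mul_pos hs ht) (show (0:ℝ) < -σ₂ + τ₁ + 1 by linarith),
    mul_pos hs (show (0:ℝ) < -σ₂ + τ₁ + 1 by linarith),
    mul_pos ht (show (0:ℝ) < -σ₂ + τ₁ + 1 by linarith),
    sq_nonneg (σ₂ * τ₁ - σ₁ * τ₂ - (-σ₂ + τ₁ + 1))]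
end

section
/- Assume α₁>0>α₂, β₁>0>β₂, β₁>α₁, θ := α₁β₂−α₂β₁ > 0. Define φᴬ = α₁/(α₁−α₂), φᴬᶠ = α₁(α₁+β₁)(2α₂+β₂) / (α₁(α₁+β₁)(2α₂+β₂) − α₂(α₂+β₂)(2α₁+β₁)), φᴬᴮ = α₁β₁(α₂+β₂)/(α₁β₁(α₂+β₂) − α₂β₂(α₁+β₁)), φᴮᶠ = β₁(α₁+β₁)(α₂+2β₂)/(β₁(α₁+β₁)(α₂+2β₂) − β₂(α₂+β₂)(α₁+2β₁)), and φᴮ = β₁/(β₁−β₂). Then 0 < φᴬ < φᴬᶠ < φᴬᴮ < φᴮᶠ < φᴮ < 1. -/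
set_option maxHeartbeats 2000000 in
theorem stmt_6 (α₁ α₂ β₁ β₂ : ℝ)
    (hα : α₁ > 0 ∧ 0 > α₂) (hβ : β₁ > 0 ∧ 0 > β₂)
    (hba : β₁ > α₁) (hθ : α₁ * β₂ - α₂ * β₁ > 0)
    (φA φAF φAB φBF φB : ℝ)
    (hφA : φA = α₁ / (α₁ - α₂))
    (hφAF : φAF = α₁ * (α₁ + β₁) * (2 * α₂ + β₂) /
      (α₁ * (α₁ + β₁) * (2 * α₂ + β₂) - α₂ * (α₂ + β₂) * (2 * α₁ + β₁)))
    (hφAB : φAB = α₁ * β₁ * (α₂ + β₂) /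
      (α₁ * β₁ * (α₂ + β₂) - α₂ * β₂ * (α₁ + β₁)))
    (hφBF : φBF = β₁ * (α₁ + β₁) * (α₂ + 2 * β₂) /
      (β₁ * (α₁ + β₁) * (α₂ + 2 * β₂) - β₂ * (α₂ + β₂) * (α₁ + 2 * β₁)))
    (hφB : φB = β₁ / (β₁ - β₂)) :
    0 < φA ∧ φA < φAF ∧ φAF < φAB ∧ φAB < φBF ∧ φBF < φB ∧ φB < 1 := by
  obtain ⟨ha1, ha2⟩ := hα
  obtain ⟨hb1, hb2⟩ := hβ
  have ha2' : 0 < -α₂ := by linarith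
  have hb2' : 0 < -β₂ := by linarith
  have hac : 0 < α₁ + β₁ := by linarith
  -- positivity of the numerators X and complements Y (φ = X/(X+Y))
  have hAFX : 0 < -(α₁ * (α₁ + β₁) * (2 * α₂ + β₂)) := by
    have h := mul_pos (mul_pos ha1 hac) (show (0:ℝ) < -(2 * α₂ + β₂) by linarith)
    nlinarith [h]
  have hAFY : 0 < α₂ * (α₂ + β₂) * (2 * α₁ + β₁) := by
    have h := mul_pos (mul_pos ha2' (show (0:ℝ) < -(α₂ + β₂) by linarith))
      (show (0:ℝ) < 2 * α₁ + β₁ by linarith)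
    nlinarith [h]
  have hABX : 0 < -(α₁ * β₁ * (α₂ + β₂)) := by
    have h := mul_pos (mul_pos ha1 hb1) (show (0:ℝ) < -(α₂ + β₂) by linarith)
    nlinarith [h]
  have hABY : 0 < α₂ * β₂ * (α₁ + β₁) := by
    have h := mul_pos (mul_pos ha2' hb2') hac
    nlinarith [h]
  have hBFX : 0 < -(β₁ * (α₁ + β₁) * (α₂ + 2 * β₂)) := by
    have h := mul_pos (mul_pos hb1 hac) (show (0:ℝ) < -(α₂ + 2 * β₂) by linarith)
    nlinarith [h]
  have hBFY : 0 < β₂ * (α₂ + β₂) * (α₁ + 2 * β₁) := by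
    have h := mul_pos (mul_pos hb2' (show (0:ℝ) < -(α₂ + β₂) by linarith))
      (show (0:ℝ) < α₁ + 2 * β₁ by linarith)
    nlinarith [h]
  have hAF2 : φAF = (-(α₁ * (α₁ + β₁) * (2 * α₂ + β₂))) /
      ((-(α₁ * (α₁ + β₁) * (2 * α₂ + β₂))) + α₂ * (α₂ + β₂) * (2 * α₁ + β₁)) := by
    rw [hφAF, ← neg_div_neg_eq]; ring_nf
  have hAB2 : φAB = (-(α₁ * β₁ * (α₂ + β₂))) /
      ((-(α₁ * β₁ * (α₂ + β₂))) + α₂ * β₂ * (α₁ + β₁)) := by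
    rw [hφAB, ← neg_div_neg_eq]; ring_nf
  have hBF2 : φBF = (-(β₁ * (α₁ + β₁) * (α₂ + 2 * β₂))) /
      ((-(β₁ * (α₁ + β₁) * (α₂ + 2 * β₂))) + β₂ * (α₂ + β₂) * (α₁ + 2 * β₁)) := by
    rw [hφBF, ← neg_div_neg_eq]; ring_nf
  have hdA : 0 < α₁ - α₂ := by linarith
  have hdB : 0 < β₁ - β₂ := by linarith
  have hdAF : 0 < (-(α₁ * (α₁ + β₁) * (2 * α₂ + β₂))) + α₂ * (α₂ + β₂) * (2 * α₁ + β₁) := by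
    linarith
  have hdAB : 0 < (-(α₁ * β₁ * (α₂ + β₂))) + α₂ * β₂ * (α₁ + β₁) := by linarith
  have hdBF : 0 < (-(β₁ * (α₁ + β₁) * (α₂ + 2 * β₂))) + β₂ * (α₂ + β₂) * (α₁ + 2 * β₁) := by
    linarith
  refine ⟨?_, ?_, ?_, ?_, ?_, ?_⟩
  · rw [hφA]; positivity
  · rw [hφA, hAF2, div_lt_div_iff₀ hdA hdAF]
    have key : (-(α₁ * (α₁ + β₁) * (2 * α₂ + β₂))) * (α₁ - α₂) -
        α₁ * ((-(α₁ * (α₁ + β₁) * (2 * α₂ + β₂))) + α₂ * (α₂ + β₂) * (2 * α₁ + β₁)) =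
        (-(α₁ * α₂)) * (α₁ * β₂ - α₂ * β₁) := by ring
    nlinarith [mul_pos (mul_pos ha1 ha2') hθ, key]
  · rw [hAF2, hAB2, div_lt_div_iff₀ hdAF hdAB]
    have key : (-(α₁ * β₁ * (α₂ + β₂))) *
        ((-(α₁ * (α₁ + β₁) * (2 * α₂ + β₂))) + α₂ * (α₂ + β₂) * (2 * α₁ + β₁)) -
        (-(α₁ * (α₁ + β₁) * (2 * α₂ + β₂))) *
        ((-(α₁ * β₁ * (α₂ + β₂))) + α₂ * β₂ * (α₁ + β₁)) =
        (-(α₁ * α₂)) * (α₁ * β₂ - α₂ * β₁) * (-(2 * α₁ * α₂ + α₂ * β₁ + α₁ * β₂)) := by ring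
    have hpos : 0 < (-(α₁ * α₂)) * (α₁ * β₂ - α₂ * β₁) *
        (-(2 * α₁ * α₂ + α₂ * β₁ + α₁ * β₂)) := by
      apply mul_pos (mul_pos (by nlinarith [mul_pos ha1 ha2'] : (0:ℝ) < -(α₁ * α₂)) hθ)
      nlinarith [mul_pos ha1 ha2', mul_pos ha2' hb1, mul_pos ha1 hb2']
    linarith [key, hpos]
  · rw [hAB2, hBF2, div_lt_div_iff₀ hdAB hdBF]
    have key : (-(β₁ * (α₁ + β₁) * (α₂ + 2 * β₂))) *
        ((-(α₁ * β₁ * (α₂ + β₂))) + α₂ * β₂ * (α₁ + β₁)) -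
        (-(α₁ * β₁ * (α₂ + β₂))) *
        ((-(β₁ * (α₁ + β₁) * (α₂ + 2 * β₂))) + β₂ * (α₂ + β₂) * (α₁ + 2 * β₁)) =
        (-(β₁ * β₂)) * (α₁ * β₂ - α₂ * β₁) * (-(α₂ * β₁ + α₁ * β₂ + 2 * β₁ * β₂)) := by ring
    have hpos : 0 < (-(β₁ * β₂)) * (α₁ * β₂ - α₂ * β₁) *
        (-(α₂ * β₁ + α₁ * β₂ + 2 * β₁ * β₂)) := by
      apply mul_pos (mul_pos (by nlinarith [mul_pos hb1 hb2'] : (0:ℝ) < -(β₁ * β₂)) hθ)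
      nlinarith [mul_pos hb1 hb2', mul_pos ha2' hb1, mul_pos ha1 hb2']
    linarith [key, hpos]
  · rw [hBF2, hφB, div_lt_div_iff₀ hdBF hdB]
    have key : β₁ * ((-(β₁ * (α₁ + β₁) * (α₂ + 2 * β₂))) + β₂ * (α₂ + β₂) * (α₁ + 2 * β₁)) -
        (-(β₁ * (α₁ + β₁) * (α₂ + 2 * β₂))) * (β₁ - β₂) =
        (-(β₁ * β₂)) * (α₁ * β₂ - α₂ * β₁) := by ring
    nlinarith [mul_pos (mul_pos hb1 hb2') hθ, key]
  · rw [hφB, div_lt_one hdB]; linarith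
end

section
/- Assume α₁>0>α₂, β₁>0>β₂, β₁>α₁, θ := α₁β₂−α₂β₁ > 0. Define φᴬ = α₁/(α₁−α₂) and φ̃ᴬᴮ = α₁β₁(α₂−β₂)/(α₁β₁(α₂−β₂) − α₂β₂(α₁−β₁)). Then β₂ < α₂ if and only if 0 < φ̃ᴬᴮ < φᴬ. -/
theorem stmt_7 (α₁ α₂ β₁ β₂ : ℝ)
    (hα : α₁ > 0 ∧ 0 > α₂) (hβ : β₁ > 0 ∧ 0 > β₂)
    (hba : β₁ > α₁) (hθ : α₁ * β₂ - α₂ * β₁ > 0)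
    (φA φABt : ℝ)
    (hφA : φA = α₁ / (α₁ - α₂))
    (hφABt : φABt = α₁ * β₁ * (α₂ - β₂) /
      (α₁ * β₁ * (α₂ - β₂) - α₂ * β₂ * (α₁ - β₁))) :
    β₂ < α₂ ↔ (0 < φABt ∧ φABt < φA) := by
  obtain ⟨ha1, ha2⟩ := hα
  obtain ⟨hb1, hb2⟩ := hβ
  set N : ℝ := α₁ * β₁ * (α₂ - β₂) with hN
  set D : ℝ := α₁ * β₁ * (α₂ - β₂) - α₂ * β₂ * (α₁ - β₁) with hD
  have hE : D - N = -(α₂ * β₂ * (α₁ - β₁)) := by ring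
  have hEpos : 0 < D - N := by
    rw [hE]
    nlinarith [mul_neg_of_pos_of_neg (mul_pos_of_neg_of_neg ha2 hb2) (show α₁ - β₁ < 0 by linarith)]
  have hkey : α₂ * N + α₁ * (D - N) = -(α₁ * α₂ * (α₁ * β₂ - α₂ * β₁)) := by
    rw [hE]; ring
  have hkeypos : 0 < α₂ * N + α₁ * (D - N) := by
    rw [hkey]
    nlinarith [mul_neg_of_neg_of_pos (mul_neg_of_pos_of_neg ha1 ha2) hθ]
  have haa : 0 < α₁ - α₂ := by linarith
  constructor
  · intro h
    have hNpos : 0 < N := by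
      rw [hN]; exact mul_pos (mul_pos ha1 hb1) (by linarith)
    have hDpos : 0 < D := by linarith
    constructor
    · rw [hφABt]; exact div_pos hNpos hDpos
    · rw [hφABt, hφA, div_lt_div_iff₀ hDpos haa]
      nlinarith
  · rintro ⟨h1, h2⟩
    by_contra hc
    push_neg at hc
    have hNle : N ≤ 0 := by rw [hN]; nlinarith [mul_pos ha1 hb1]
    have hDne : D ≠ 0 := by
      intro h0
      rw [hφABt, h0, div_zero] at h1
      exact lt_irrefl 0 h1
    rcases lt_or_gt_of_ne hDne with hDneg | hDpos
    · have hNneg : N < 0 := by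
        rcases hNle.lt_or_eq with h | h
        · exact h
        · rw [hφABt, h, zero_div] at h1; exact absurd h1 (lt_irrefl 0)
      have : (-N) / (-D) < α₁ / (α₁ - α₂) := by
        rw [neg_div_neg_eq, ← hφABt, ← hφA]; exact h2
      rw [div_lt_div_iff₀ (by linarith) haa] at this
      nlinarith
    · rw [hφABt] at h1
      have : N / D ≤ 0 := div_nonpos_of_nonpos_of_nonneg hNle hDpos.le
      linarith
end

section
/- Assume α₁>0>α₂, β₁>0>β₂, β₁>α₁, θ := α₁β₂−α₂β₁ > 0, and let φᴬᶠ = α₁(α₁+β₁)(2α₂+β₂)/(α₁(α₁+β₁)(2α₂+β₂)−α₂(α₂+β₂)(2α₁+β₁)), φᶠ = (α₁+β₁)/(α₁+β₁−α₂−β₂), φᴮᶠ = β₁(α₁+β₁)(α₂+2β₂)/(β₁(α₁+β₁)(α₂+2β₂)−β₂(α₂+β₂)(α₁+2β₁)). Then φᴬᶠ < φᶠ < φᴮᶠ. -/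
theorem stmt_8 (α₁ α₂ β₁ β₂ : ℝ)
    (hα : α₁ > 0 ∧ 0 > α₂) (hβ : β₁ > 0 ∧ 0 > β₂)
    (hba : β₁ > α₁) (hθ : α₁ * β₂ - α₂ * β₁ > 0)
    (φAF φF φBF : ℝ)
    (hφAF : φAF = α₁ * (α₁ + β₁) * (2 * α₂ + β₂) /
      (α₁ * (α₁ + β₁) * (2 * α₂ + β₂) - α₂ * (α₂ + β₂) * (2 * α₁ + β₁)))
    (hφF : φF = (α₁ + β₁) / (α₁ + β₁ - α₂ - β₂))
    (hφBF : φBF = β₁ * (α₁ + β₁) * (α₂ + 2 * β₂) /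
      (β₁ * (α₁ + β₁) * (α₂ + 2 * β₂) - β₂ * (α₂ + β₂) * (α₁ + 2 * β₁))) :
    φAF < φF ∧ φF < φBF := by
  obtain ⟨ha1, ha2⟩ := hα
  obtain ⟨hb1, hb2⟩ := hβ
  have hs : (0:ℝ) < α₁ + β₁ := by linarith
  have hmt : (0:ℝ) < -(α₂ + β₂) := by linarith
  have hDF : (0:ℝ) < α₁ + β₁ - α₂ - β₂ := by linarith
  have hDA : α₁ * (α₁ + β₁) * (2 * α₂ + β₂) - α₂ * (α₂ + β₂) * (2 * α₁ + β₁) < 0 := by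
    nlinarith [mul_pos (mul_pos ha1 hs) (show (0:ℝ) < -(2 * α₂ + β₂) by linarith),
      mul_pos (mul_pos_of_neg_of_neg ha2 (show α₂ + β₂ < 0 by linarith))
        (show (0:ℝ) < 2 * α₁ + β₁ by linarith)]
  have hDB : β₁ * (α₁ + β₁) * (α₂ + 2 * β₂) - β₂ * (α₂ + β₂) * (α₁ + 2 * β₁) < 0 := by
    nlinarith [mul_pos (mul_pos hb1 hs) (show (0:ℝ) < -(α₂ + 2 * β₂) by linarith),
      mul_pos (mul_pos_of_neg_of_neg hb2 (show α₂ + β₂ < 0 by linarith))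
        (show (0:ℝ) < α₁ + 2 * β₁ by linarith)]
  have key : (0:ℝ) < (α₁ + β₁) * (-(α₂ + β₂)) * (α₁ * β₂ - α₂ * β₁) :=
    mul_pos (mul_pos hs hmt) hθ
  constructor
  · rw [hφAF, hφF, show α₁ * (α₁ + β₁) * (2 * α₂ + β₂) /
      (α₁ * (α₁ + β₁) * (2 * α₂ + β₂) - α₂ * (α₂ + β₂) * (2 * α₁ + β₁))
      = -(α₁ * (α₁ + β₁) * (2 * α₂ + β₂)) /
        -(α₁ * (α₁ + β₁) * (2 * α₂ + β₂) - α₂ * (α₂ + β₂) * (2 * α₁ + β₁)) from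
        (neg_div_neg_eq _ _).symm,
      div_lt_div_iff₀ (by linarith) hDF]
    nlinarith [key]
  · rw [hφF, hφBF, show β₁ * (α₁ + β₁) * (α₂ + 2 * β₂) /
      (β₁ * (α₁ + β₁) * (α₂ + 2 * β₂) - β₂ * (α₂ + β₂) * (α₁ + 2 * β₁))
      = -(β₁ * (α₁ + β₁) * (α₂ + 2 * β₂)) /
        -(β₁ * (α₁ + β₁) * (α₂ + 2 * β₂) - β₂ * (α₂ + β₂) * (α₁ + 2 * β₁)) from
        (neg_div_neg_eq _ _).symm,
      div_lt_div_iff₀ hDF (by linarith)]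
    nlinarith [key]
end

section
/- Assume α₁>0>α₂, β₁>0>β₂, β₁>α₁, θ := α₁β₂−α₂β₁ > 0, and fix 0 < φ < 1. Let mᴬ = α₁α₂/(α₁−φ(α₁−α₂)), mᴮ = β₁β₂/(β₁−φ(β₁−β₂)), and m* = (1/θ)·√(−α₁α₂β₁β₂(α₁+β₁)(α₂+β₂)/(φ(1−φ))). Then min{|mᴬ|, |mᴮ|} ≤ m*. -/
lemma bound_aux (c d P Q U V : ℝ) (hc : 0 < c) (hd : 0 < d)
    (hQ : 0 ≤ d*Q) (h3 : c*P ≤ U) (h4 : d*Q ≤ V) (hP : 0 ≤ c*P) :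
    (c*d)^2*(P*Q) ≤ (c*d)*(U*V) := by
  have h5 : (c*P)*(d*Q) ≤ U*V := mul_le_mul h3 h4 hQ (le_trans hP h3)
  calc (c*d)^2*(P*Q) = (c*d)*((c*P)*(d*Q)) := by ring
    _ ≤ (c*d)*(U*V) := mul_le_mul_of_nonneg_left h5 (by positivity)

lemma key (a b c d x y : ℝ) (ha : 0 < a) (hb : 0 < b) (hc : 0 < c) (hd : 0 < d)
    (hE : 0 ≤ (b*y - d*x) * (a*y - c*x)) :
    (a*b)^2 * ((b*y - d*x) * (a*y - c*x)) ≤ a*b*c*d*(a+c)*(b+d) * x^2 ∨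
    (c*d)^2 * ((b*y - d*x) * (a*y - c*x)) ≤ a*b*c*d*(a+c)*(b+d) * y^2 := by
  have habcd : a*b ≤ (a+c)*(b+d) := by nlinarith
  rcases le_total 0 x with hx | hx <;> rcases le_total 0 y with hy | hy
  · -- x ≥ 0, y ≥ 0
    have A1 : 0 ≤ a*b*y := by positivity
    have A2 : 0 ≤ c*d*x := by positivity
    rcases le_total 0 (b*y - d*x) with h1 | h1 <;> rcases le_total 0 (a*y - c*x) with h2 | h2
    · right
      have h3 : c*(b*y - d*x) ≤ (a+c)*(b*y) := by nlinarith
      have h4 : d*(a*y - c*x) ≤ (b+d)*(a*y) := by nlinarith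
      calc (c*d)^2 * ((b*y - d*x) * (a*y - c*x))
          ≤ (c*d)*(((a+c)*(b*y))*((b+d)*(a*y))) :=
            bound_aux c d _ _ _ _ hc hd (mul_nonneg hd.le h2) h3 h4 (mul_nonneg hc.le h1)
        _ = a*b*c*d*(a+c)*(b+d) * y^2 := by ring
    · left
      have hE0 : (b*y - d*x) * (a*y - c*x) = 0 :=
        le_antisymm (mul_nonpos_of_nonneg_of_nonpos h1 h2) hE
      rw [hE0, mul_zero]; positivity
    · left
      have hE0 : (b*y - d*x) * (a*y - c*x) = 0 :=
        le_antisymm (mul_nonpos_of_nonpos_of_nonneg h1 h2) hE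
      rw [hE0, mul_zero]; positivity
    · left
      have h1' : 0 ≤ d*x - b*y := by linarith
      have h2' : 0 ≤ c*x - a*y := by linarith
      have h3 : a*(d*x - b*y) ≤ a*(d*x) := by nlinarith
      have h4 : b*(c*x - a*y) ≤ b*(c*x) := by nlinarith
      calc (a*b)^2 * ((b*y - d*x) * (a*y - c*x))
          = (a*b)^2 * ((d*x - b*y) * (c*x - a*y)) := by ring
        _ ≤ (a*b)*((a*(d*x))*(b*(c*x))) :=
            bound_aux a b _ _ _ _ ha hb (mul_nonneg hb.le h2') h3 h4 (mul_nonneg ha.le h1')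
        _ = (a*b)*((a*b*c*d)*x^2) := by ring
        _ ≤ ((a+c)*(b+d))*((a*b*c*d)*x^2) :=
            mul_le_mul_of_nonneg_right habcd (by positivity)
        _ = a*b*c*d*(a+c)*(b+d) * x^2 := by ring
  · -- x ≥ 0, y ≤ 0
    have h1' : 0 ≤ d*x - b*y := by nlinarith
    have h2' : 0 ≤ c*x - a*y := by nlinarith
    rcases le_total (a*b*(-y)) (c*d*x) with hm | hm
    · left
      have h3 : a*(d*x - b*y) ≤ (a+c)*(d*x) := by nlinarith
      have h4 : b*(c*x - a*y) ≤ (b+d)*(c*x) := by nlinarith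
      calc (a*b)^2 * ((b*y - d*x) * (a*y - c*x))
          = (a*b)^2 * ((d*x - b*y) * (c*x - a*y)) := by ring
        _ ≤ (a*b)*(((a+c)*(d*x))*((b+d)*(c*x))) :=
            bound_aux a b _ _ _ _ ha hb (mul_nonneg hb.le h2') h3 h4 (mul_nonneg ha.le h1')
        _ = a*b*c*d*(a+c)*(b+d) * x^2 := by ring
    · right
      have h3 : c*(d*x - b*y) ≤ (a+c)*(b*(-y)) := by nlinarith
      have h4 : d*(c*x - a*y) ≤ (b+d)*(a*(-y)) := by nlinarith
      calc (c*d)^2 * ((b*y - d*x) * (a*y - c*x))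
          = (c*d)^2 * ((d*x - b*y) * (c*x - a*y)) := by ring
        _ ≤ (c*d)*(((a+c)*(b*(-y)))*((b+d)*(a*(-y)))) :=
            bound_aux c d _ _ _ _ hc hd (mul_nonneg hd.le h2') h3 h4 (mul_nonneg hc.le h1')
        _ = a*b*c*d*(a+c)*(b+d) * y^2 := by ring
  · -- x ≤ 0, y ≥ 0
    have h1' : 0 ≤ b*y - d*x := by nlinarith
    have h2' : 0 ≤ a*y - c*x := by nlinarith
    rcases le_total (c*d*(-x)) (a*b*y) with hm | hm
    · right
      have h3 : c*(b*y - d*x) ≤ (a+c)*(b*y) := by nlinarith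
      have h4 : d*(a*y - c*x) ≤ (b+d)*(a*y) := by nlinarith
      calc (c*d)^2 * ((b*y - d*x) * (a*y - c*x))
          ≤ (c*d)*(((a+c)*(b*y))*((b+d)*(a*y))) :=
            bound_aux c d _ _ _ _ hc hd (mul_nonneg hd.le h2') h3 h4 (mul_nonneg hc.le h1')
        _ = a*b*c*d*(a+c)*(b+d) * y^2 := by ring
    · left
      have h3 : a*(b*y - d*x) ≤ (a+c)*(d*(-x)) := by nlinarith
      have h4 : b*(a*y - c*x) ≤ (b+d)*(c*(-x)) := by nlinarith
      calc (a*b)^2 * ((b*y - d*x) * (a*y - c*x))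
          ≤ (a*b)*(((a+c)*(d*(-x)))*((b+d)*(c*(-x)))) :=
            bound_aux a b _ _ _ _ ha hb (mul_nonneg hb.le h2') h3 h4 (mul_nonneg ha.le h1')
        _ = a*b*c*d*(a+c)*(b+d) * x^2 := by ring
  · -- x ≤ 0, y ≤ 0
    have A1 : 0 ≤ a*b*(-y) := mul_nonneg (mul_nonneg ha.le hb.le) (neg_nonneg.2 hy)
    have A2 : 0 ≤ c*d*(-x) := mul_nonneg (mul_nonneg hc.le hd.le) (neg_nonneg.2 hx)
    have hE' : 0 ≤ (b*(-y) - d*(-x)) * (a*(-y) - c*(-x)) := by nlinarith [hE]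
    rcases le_total 0 (b*(-y) - d*(-x)) with h1 | h1 <;>
      rcases le_total 0 (a*(-y) - c*(-x)) with h2 | h2
    · right
      have h3 : c*(b*(-y) - d*(-x)) ≤ (a+c)*(b*(-y)) := by nlinarith
      have h4 : d*(a*(-y) - c*(-x)) ≤ (b+d)*(a*(-y)) := by nlinarith
      calc (c*d)^2 * ((b*y - d*x) * (a*y - c*x))
          = (c*d)^2 * ((b*(-y) - d*(-x)) * (a*(-y) - c*(-x))) := by ring
        _ ≤ (c*d)*(((a+c)*(b*(-y)))*((b+d)*(a*(-y)))) :=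
            bound_aux c d _ _ _ _ hc hd (mul_nonneg hd.le h2) h3 h4 (mul_nonneg hc.le h1)
        _ = a*b*c*d*(a+c)*(b+d) * y^2 := by ring
    · left
      have hE0 : (b*y - d*x) * (a*y - c*x) = 0 := by
        have h0 : (b*(-y) - d*(-x)) * (a*(-y) - c*(-x)) = 0 :=
          le_antisymm (mul_nonpos_of_nonneg_of_nonpos h1 h2) hE'
        linear_combination h0
      rw [hE0, mul_zero]; positivity
    · left
      have hE0 : (b*y - d*x) * (a*y - c*x) = 0 := by
        have h0 : (b*(-y) - d*(-x)) * (a*(-y) - c*(-x)) = 0 :=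
          le_antisymm (mul_nonpos_of_nonpos_of_nonneg h1 h2) hE'
        linear_combination h0
      rw [hE0, mul_zero]; positivity
    · left
      have h1' : 0 ≤ d*(-x) - b*(-y) := by linarith
      have h2' : 0 ≤ c*(-x) - a*(-y) := by linarith
      have h3 : a*(d*(-x) - b*(-y)) ≤ a*(d*(-x)) := by nlinarith
      have h4 : b*(c*(-x) - a*(-y)) ≤ b*(c*(-x)) := by nlinarith
      calc (a*b)^2 * ((b*y - d*x) * (a*y - c*x))
          = (a*b)^2 * ((d*(-x) - b*(-y)) * (c*(-x) - a*(-y))) := by ring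
        _ ≤ (a*b)*((a*(d*(-x)))*(b*(c*(-x)))) :=
            bound_aux a b _ _ _ _ ha hb (mul_nonneg hb.le h2') h3 h4 (mul_nonneg ha.le h1')
        _ = (a*b)*((a*b*c*d)*x^2) := by ring
        _ ≤ ((a+c)*(b+d))*((a*b*c*d)*x^2) :=
            mul_le_mul_of_nonneg_right habcd (by positivity)
        _ = a*b*c*d*(a+c)*(b+d) * x^2 := by ring

theorem stmt_10 (α₁ α₂ β₁ β₂ φ mA mB mstar : ℝ)
    (hα : α₁ > 0 ∧ 0 > α₂) (hβ : β₁ > 0 ∧ 0 > β₂)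
    (hba : β₁ > α₁) (hθ : α₁ * β₂ - α₂ * β₁ > 0)
    (hab : α₁ + β₁ > 0 ∧ 0 > α₂ + β₂)
    (hφ : 0 < φ ∧ φ < 1)
    (hmA : mA = α₁ * α₂ / (α₁ - φ * (α₁ - α₂)))
    (hmB : mB = β₁ * β₂ / (β₁ - φ * (β₁ - β₂)))
    (hmstar : mstar = (1 / (α₁ * β₂ - α₂ * β₁)) *
      Real.sqrt (-(α₁ * α₂ * β₁ * β₂ * (α₁ + β₁) * (α₂ + β₂)) / (φ * (1 - φ)))) :
    min |mA| |mB| ≤ mstar := by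
  obtain ⟨ha1, ha2⟩ := hα
  obtain ⟨hb1, hb2⟩ := hβ
  obtain ⟨hab1, hab2⟩ := hab
  obtain ⟨hφ1, hφ2⟩ := hφ
  have hφ3 : 0 < 1 - φ := by linarith
  set x := α₁ - φ * (α₁ - α₂) with hxdef
  set y := β₁ - φ * (β₁ - β₂) with hydef
  have hNpos : 0 < -(α₁ * α₂ * β₁ * β₂ * (α₁ + β₁) * (α₂ + β₂)) := by
    have := mul_pos (mul_pos (mul_pos (mul_pos (mul_pos ha1 (neg_pos.2 ha2)) hb1)
      (neg_pos.2 hb2)) hab1) (neg_pos.2 hab2)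
    nlinarith [this]
  have harg : 0 ≤ -(α₁ * α₂ * β₁ * β₂ * (α₁ + β₁) * (α₂ + β₂)) / (φ * (1 - φ)) :=
    div_nonneg hNpos.le (by positivity)
  have hms_nonneg : 0 ≤ mstar := by
    rw [hmstar]
    exact mul_nonneg (by positivity) (Real.sqrt_nonneg _)
  have hid : ((-α₂)*y - (-β₂)*x) * (α₁*y - β₁*x)
      = φ*(1-φ)*(α₁ * β₂ - α₂ * β₁)^2 := by
    rw [hxdef, hydef]; ring
  have hE : 0 ≤ ((-α₂)*y - (-β₂)*x) * (α₁*y - β₁*x) := by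
    rw [hid]; positivity
  have hden : 0 < φ*(1-φ)*(α₁ * β₂ - α₂ * β₁)^2 := by positivity
  have hms2 : mstar^2 = -(α₁ * α₂ * β₁ * β₂ * (α₁ + β₁) * (α₂ + β₂))
      / (φ*(1-φ)*(α₁ * β₂ - α₂ * β₁)^2) := by
    rw [hmstar, mul_pow, Real.sq_sqrt harg]
    have h1 : (α₁ * β₂ - α₂ * β₁) ≠ 0 := ne_of_gt hθ
    have h2 : φ ≠ 0 := ne_of_gt hφ1
    have h3 : (1-φ) ≠ 0 := ne_of_gt hφ3
    field_simp
  by_cases hx0 : x = 0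
  · rw [hx0, div_zero] at hmA
    exact le_trans (min_le_left _ _) (by rw [hmA, abs_zero]; exact hms_nonneg)
  by_cases hy0 : y = 0
  · rw [hy0, div_zero] at hmB
    exact le_trans (min_le_right _ _) (by rw [hmB, abs_zero]; exact hms_nonneg)
  have hx2 : 0 < x^2 := by positivity
  have hy2 : 0 < y^2 := by positivity
  rcases key α₁ (-α₂) β₁ (-β₂) x y ha1 (neg_pos.2 ha2) hb1 (neg_pos.2 hb2) hE with kl | kr
  · refine le_trans (min_le_left _ _) ?_
    have h2 : mA^2 ≤ mstar^2 := by
      rw [hmA, div_pow, hms2, div_le_div_iff₀ hx2 hden]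
      rw [hid] at kl
      linarith [kl]
    calc |mA| = Real.sqrt (mA^2) := (Real.sqrt_sq_eq_abs mA).symm
      _ ≤ Real.sqrt (mstar^2) := Real.sqrt_le_sqrt h2
      _ = mstar := Real.sqrt_sq hms_nonneg
  · refine le_trans (min_le_right _ _) ?_
    have h2 : mB^2 ≤ mstar^2 := by
      rw [hmB, div_pow, hms2, div_le_div_iff₀ hy2 hden]
      rw [hid] at kr
      linarith [kr]
    calc |mB| = Real.sqrt (mB^2) := (Real.sqrt_sq_eq_abs mB).symm
      _ ≤ Real.sqrt (mstar^2) := Real.sqrt_le_sqrt h2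
      _ = mstar := Real.sqrt_sq hms_nonneg
end

section
/- Assume α₁>0>α₂, β₁>0>β₂, β₁>α₁, θ := α₁β₂−α₂β₁ > 0, fix 0 < φ < 1 with m₁ = φm, m₂ = (1−φ)m for m > 0, and define mᴬ, mᴮ as before and φᴮ = β₁/(β₁−β₂), φᴬᴮ = α₁β₁(α₂+β₂)/(α₁β₁(α₂+β₂)−α₂β₂(α₁+β₁)). Then 0 < mᴬ < −mᴮ if and only if φᴬᴮ < φ < φᴮ. -/
theorem stmt_12 (α₁ α₂ β₁ β₂ φ mA mB φB φAB : ℝ)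
    (hα : α₁ > 0 ∧ 0 > α₂) (hβ : β₁ > 0 ∧ 0 > β₂)
    (hba : β₁ > α₁) (hθ : α₁ * β₂ - α₂ * β₁ > 0)
    (hφ : 0 < φ ∧ φ < 1)
    (hmA : mA = α₁ * α₂ / (α₁ - φ * (α₁ - α₂)))
    (hmB : mB = β₁ * β₂ / (β₁ - φ * (β₁ - β₂)))
    (hφB : φB = β₁ / (β₁ - β₂))
    (hφAB : φAB = α₁ * β₁ * (α₂ + β₂) /
      (α₁ * β₁ * (α₂ + β₂) - α₂ * β₂ * (α₁ + β₁))) :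
    (0 < mA ∧ mA < -mB) ↔ (φAB < φ ∧ φ < φB) := by
  obtain ⟨ha1, ha2⟩ := hα
  obtain ⟨hb1, hb2⟩ := hβ
  obtain ⟨hφ0, hφ1⟩ := hφ
  set dA := α₁ - φ * (α₁ - α₂) with hdAdef
  set dB := β₁ - φ * (β₁ - β₂) with hdBdef
  set N := α₁ * β₁ * (α₂ + β₂) with hNdef
  set D := α₁ * β₁ * (α₂ + β₂) - α₂ * β₂ * (α₁ + β₁) with hDdef
  have hD : D < 0 := by nlinarith [mul_pos ha1 hb1, mul_pos (mul_pos ha1 hb1) hθ,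
    mul_neg_of_pos_of_neg ha1 hb2, mul_neg_of_neg_of_pos ha2 hb1]
  have hbb : β₁ - β₂ > 0 := by linarith
  have hab : α₁ - α₂ > 0 := by linarith
  have haa : α₁ * α₂ < 0 := mul_neg_of_pos_of_neg ha1 ha2
  have hbbm : β₁ * β₂ < 0 := mul_neg_of_pos_of_neg hb1 hb2
  have hid : α₁ * α₂ * dB + β₁ * β₂ * dA = N - φ * D := by
    simp only [hdAdef, hdBdef, hNdef, hDdef]; ring
  have hkey : α₁ * D - N * (α₁ - α₂) > 0 := by
    have : α₁ * D - N * (α₁ - α₂) = (α₁ * α₂) * (α₂ * β₁ - α₁ * β₂) := by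
      simp only [hNdef, hDdef]; ring
    rw [this]
    exact mul_pos_of_neg_of_neg haa (by linarith)
  subst hmA hmB hφB hφAB
  constructor
  · rintro ⟨h1, h2⟩
    have hdA : dA < 0 := by
      rcases lt_trichotomy dA 0 with h | h | h
      · exact h
      · rw [h, div_zero] at h1; linarith
      · have := div_neg_of_neg_of_pos haa h
        linarith
    have hdB : 0 < dB := by
      have hmBneg : β₁ * β₂ / dB < 0 := by linarith [div_pos_of_neg_of_neg haa hdA]
      rcases lt_trichotomy dB 0 with h | h | h
      · exfalso
        have := div_pos_of_neg_of_neg hbbm h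
        linarith
      · rw [h, div_zero] at hmBneg; linarith
      · exact h
    have h2' : (-(α₁ * α₂)) / (-dA) < (-(β₁ * β₂)) / dB := by
      rw [neg_div_neg_eq, neg_div]; exact h2
    rw [div_lt_div_iff₀ (by linarith) hdB] at h2'
    have hNφD : N - φ * D > 0 := by nlinarith [h2', hid]
    constructor
    · rw [div_lt_iff_of_neg hD]; linarith
    · rw [lt_div_iff₀ hbb]; linarith [hdB]
  · rintro ⟨h1, h2⟩
    rw [div_lt_iff_of_neg hD] at h1
    have hNφD : N - φ * D > 0 := by linarith
    rw [lt_div_iff₀ hbb] at h2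
    have hdB : 0 < dB := by rw [hdBdef]; linarith
    have hdA : dA < 0 := by
      have h3 : φ * D * (α₁ - α₂) < α₁ * D := by nlinarith [mul_lt_mul_of_pos_right h1 hab]
      have h4 : dA * (-D) < 0 := by rw [hdAdef]; nlinarith
      nlinarith
    refine ⟨div_pos_of_neg_of_neg haa hdA, ?_⟩
    have hineq : α₁ * α₂ * dB + β₁ * β₂ * dA > 0 := by rw [hid]; linarith
    have h2' : (-(α₁ * α₂)) / (-dA) < (-(β₁ * β₂)) / dB := by
      rw [div_lt_div_iff₀ (by linarith) hdB]; nlinarith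
    rw [neg_div_neg_eq, neg_div] at h2'
    exact h2'
end

section
/- Assume α₁>0>α₂, β₁>0>β₂, β₁>α₁, θ := α₁β₂−α₂β₁ > 0, 0 < φ < 1, and define mᴬ = α₁α₂/(α₁−φ(α₁−α₂)), mᴮ = β₁β₂/(β₁−φ(β₁−β₂)). Then it is impossible that 0 < mᴮ ≤ mᴬ, impossible that 0 < −mᴬ ≤ mᴮ, and impossible that 0 < mᴮ ≤ −mᴬ. -/
theorem stmt_13 (α₁ α₂ β₁ β₂ φ mA mB : ℝ)
    (hα : α₁ > 0 ∧ 0 > α₂) (hβ : β₁ > 0 ∧ 0 > β₂)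
    (hba : β₁ > α₁) (hθ : α₁ * β₂ - α₂ * β₁ > 0)
    (hφ : 0 < φ ∧ φ < 1)
    (hmA : mA = α₁ * α₂ / (α₁ - φ * (α₁ - α₂)))
    (hmB : mB = β₁ * β₂ / (β₁ - φ * (β₁ - β₂))) :
    ¬ (0 < mB ∧ mB ≤ mA) ∧ ¬ (0 < -mA ∧ -mA ≤ mB) ∧ ¬ (0 < mB ∧ mB ≤ -mA) := by
  obtain ⟨ha1, ha2⟩ := hα
  obtain ⟨hb1, hb2⟩ := hβ
  obtain ⟨hp0, hp1⟩ := hφ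
  set DA := α₁ - φ * (α₁ - α₂) with hDAdef
  set DB := β₁ - φ * (β₁ - β₂) with hDBdef
  rcases le_or_gt 0 DB with hDB | hDB
  · -- DB ≥ 0 : mB ≤ 0
    have hmBle : mB ≤ 0 := by
      rw [hmB]
      rcases eq_or_lt_of_le hDB with h | h
      · rw [← h, div_zero]
      · exact le_of_lt (div_neg_of_neg_of_pos (mul_neg_of_pos_of_neg hb1 hb2) h)
    refine ⟨?_, ?_, ?_⟩
    · rintro ⟨h1, _⟩; linarith
    · rintro ⟨h1, h2⟩; linarith
    · rintro ⟨h1, _⟩; linarith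
  · -- DB < 0
    have hkey : α₁ * (β₁ - β₂) < β₁ * (α₁ - α₂) := by nlinarith
    have hDA : DA < 0 := by
      have h1 : φ * (β₁ - β₂) > β₁ := by rw [hDBdef] at hDB; linarith
      have h2 : φ * (α₁ - α₂) * β₁ > α₁ * β₁ := by nlinarith
      rw [hDAdef]; nlinarith
    have hmApos : 0 < mA := by
      rw [hmA]
      exact div_pos_of_neg_of_neg (mul_neg_of_pos_of_neg ha1 ha2) hDA
    have hmBpos : 0 < mB := by
      rw [hmB]
      exact div_pos_of_neg_of_neg (mul_neg_of_pos_of_neg hb1 hb2) hDB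
    have hlt : mA < mB := by
      rw [hmA, hmB]
      rw [show α₁ * α₂ / DA = (-(α₁ * α₂)) / (-DA) by rw [neg_div_neg_eq],
          show β₁ * β₂ / DB = (-(β₁ * β₂)) / (-DB) by rw [neg_div_neg_eq]]
      rw [div_lt_div_iff₀ (by linarith) (by linarith)]
      have hE : α₁ * α₂ * DB - β₁ * β₂ * DA
          = (1 - φ) * (α₁ * β₁) * (α₂ - β₂) + φ * (α₂ * β₂) * (α₁ - β₁) := by
        rw [hDAdef, hDBdef]; ring
      rcases le_or_gt α₂ β₂ with hc | hc
      · nlinarith [mul_pos hp0 (mul_pos (mul_pos ha1 hb1) (sub_pos.mpr hba)),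
          mul_nonneg (mul_nonneg (le_of_lt (sub_pos.mpr hp1)) (le_of_lt (mul_pos ha1 hb1))) (sub_nonneg.mpr hc),
          mul_pos (mul_pos hp0 (mul_pos_of_neg_of_neg ha2 hb2)) (sub_pos.mpr hba)]
      · have h1 : φ * (β₁ - β₂) > β₁ := by rw [hDBdef] at hDB; linarith
        nlinarith [mul_pos (mul_pos hp0 (neg_pos.mpr hb2)) hθ,
          mul_pos (mul_pos (sub_pos.mpr h1) ha1) (sub_pos.mpr hc)]
    refine ⟨?_, ?_, ?_⟩
    · rintro ⟨_, h2⟩; linarith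
    · rintro ⟨h1, _⟩; linarith
    · rintro ⟨_, h2⟩; linarith
end

section
/- Assume α₁>0>α₂, β₁>0>β₂ with α₁+β₁>0>α₂+β₂, m₁,m₂>0, and set κₖ = mₖ/(αₖ+βₖ). If |κ₁+κ₂| < 1, then p̂₁ = (1−2κ₁+√(1−4κ₁κ₂))/2 and p̂₂ = (1−2κ₂−√(1−4κ₁κ₂))/2 satisfy 0 < p̂₂ < p̂₁ < 1 and the pair (p̂₁,p̂₂) solves (α₁+β₁)p(1−p) + m₁(p' − p) = 0, (α₂+β₂)p'(1−p') + m₂(p − p') = 0. -/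
theorem stmt_15 (α₁ α₂ β₁ β₂ m₁ m₂ : ℝ)
    (hα : α₁ > 0 ∧ 0 > α₂) (hβ : β₁ > 0 ∧ 0 > β₂)
    (hab : α₁ + β₁ > 0 ∧ 0 > α₂ + β₂)
    (hm₁ : m₁ > 0) (hm₂ : m₂ > 0)
    (κ₁ κ₂ : ℝ) (hκ₁ : κ₁ = m₁ / (α₁ + β₁)) (hκ₂ : κ₂ = m₂ / (α₂ + β₂))
    (hκ : |κ₁ + κ₂| < 1)
    (p₁ p₂ : ℝ)
    (hp₁ : p₁ = (1 - 2 * κ₁ + Real.sqrt (1 - 4 * κ₁ * κ₂)) / 2)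
    (hp₂ : p₂ = (1 - 2 * κ₂ - Real.sqrt (1 - 4 * κ₁ * κ₂)) / 2) :
    (0 < p₂ ∧ p₂ < p₁ ∧ p₁ < 1) ∧
    (α₁ + β₁) * p₁ * (1 - p₁) + m₁ * (p₂ - p₁) = 0 ∧
    (α₂ + β₂) * p₂ * (1 - p₂) + m₂ * (p₁ - p₂) = 0 := by
  obtain ⟨hab1, hab2⟩ := hab
  have hκ1pos : κ₁ > 0 := by rw [hκ₁]; positivity
  have hκ2neg : κ₂ < 0 := by
    rw [hκ₂]; exact div_neg_of_pos_of_neg hm₂ hab2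
  have hDpos : (0:ℝ) ≤ 1 - 4 * κ₁ * κ₂ := by nlinarith
  set s := Real.sqrt (1 - 4 * κ₁ * κ₂) with hs
  have hs0 : 0 ≤ s := Real.sqrt_nonneg _
  have hs2 : s ^ 2 = 1 - 4 * κ₁ * κ₂ := Real.sq_sqrt hDpos
  have habs := abs_lt.mp hκ
  have hm1 : m₁ = κ₁ * (α₁ + β₁) := by
    field_simp [hκ₁] at *
    linarith
  have hm2 : m₂ = κ₂ * (α₂ + β₂) := by
    have : α₂ + β₂ ≠ 0 := ne_of_lt hab2
    rw [hκ₂, div_mul_cancel₀ _ this]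
  refine ⟨⟨?_, ?_, ?_⟩, ?_, ?_⟩
  · rw [hp₂]
    have h1 : s < 1 - 2 * κ₂ := by
      nlinarith [sq_nonneg (s - (1 - 2 * κ₂))]
    linarith
  · rw [hp₁, hp₂]
    have : κ₁ - κ₂ < s := by
      nlinarith [sq_nonneg (s - (κ₁ - κ₂))]
    linarith
  · rw [hp₁]
    have : s < 1 + 2 * κ₁ := by
      nlinarith [sq_nonneg (s - (1 + 2 * κ₁))]
    linarith
  · rw [hp₁, hp₂, hm1]; linear_combination (-(α₁+β₁)/4) * hs2
  · rw [hp₁, hp₂, hm2]; linear_combination (-(α₂+β₂)/4) * hs2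
end

section
/- Assume θ = α₁β₂ − α₂β₁ = 0 with α₁>0>α₂, β₁>0>β₂, |αₖ| ≤ |βₖ| for k=1,2, m₁,m₂>0, αₖ+βₖ ≠ 0, and define σₖ = mₖ/αₖ, τₖ = mₖ/βₖ, κₖ = mₖ/(αₖ+βₖ). Then σ₁+σ₂ = (β₂/α₂)(τ₁+τ₂), κ₁+κ₂ = (β₂/(α₂+β₂))(τ₁+τ₂), and exactly one of the following holds: 0 < κ₁+κ₂ < τ₁+τ₂ ≤ σ₁+σ₂, or 0 > κ₁+κ₂ > τ₁+τ₂ ≥ σ₁+σ₂, or κ₁+κ₂ = τ₁+τ₂ = σ₁+σ₂ = 0. -/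
theorem stmt_17 (α₁ α₂ β₁ β₂ m₁ m₂ : ℝ)
    (hα : α₁ > 0 ∧ 0 > α₂) (hβ : β₁ > 0 ∧ 0 > β₂)
    (hθ : α₁ * β₂ - α₂ * β₁ = 0)
    (h1 : |α₁| ≤ |β₁|) (h2 : |α₂| ≤ |β₂|)
    (hm₁ : m₁ > 0) (hm₂ : m₂ > 0)
    (hab1 : α₁ + β₁ ≠ 0) (hab2 : α₂ + β₂ ≠ 0)
    (σ₁ σ₂ τ₁ τ₂ κ₁ κ₂ : ℝ)
    (hσ₁ : σ₁ = m₁ / α₁) (hσ₂ : σ₂ = m₂ / α₂)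
    (hτ₁ : τ₁ = m₁ / β₁) (hτ₂ : τ₂ = m₂ / β₂)
    (hκ₁ : κ₁ = m₁ / (α₁ + β₁)) (hκ₂ : κ₂ = m₂ / (α₂ + β₂)) :
    σ₁ + σ₂ = (β₂ / α₂) * (τ₁ + τ₂) ∧
    κ₁ + κ₂ = (β₂ / (α₂ + β₂)) * (τ₁ + τ₂) ∧
    ((0 < κ₁ + κ₂ ∧ κ₁ + κ₂ < τ₁ + τ₂ ∧ τ₁ + τ₂ ≤ σ₁ + σ₂) ∨
     (0 > κ₁ + κ₂ ∧ κ₁ + κ₂ > τ₁ + τ₂ ∧ τ₁ + τ₂ ≥ σ₁ + σ₂) ∨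
     (κ₁ + κ₂ = 0 ∧ τ₁ + τ₂ = 0 ∧ σ₁ + σ₂ = 0)) := by
  obtain ⟨ha1, ha2⟩ := hα
  obtain ⟨hb1, hb2⟩ := hβ
  have ha1' : α₁ ≠ 0 := ne_of_gt ha1
  have ha2' : α₂ ≠ 0 := ne_of_lt ha2
  have hb1' : β₁ ≠ 0 := ne_of_gt hb1
  have hb2' : β₂ ≠ 0 := ne_of_lt hb2
  set r : ℝ := β₂ / α₂ with hr
  have hβ1 : β₁ = r * α₁ := by
    rw [hr]; field_simp
    nlinarith [hθ]
  have hβ2 : β₂ = r * α₂ := by rw [hr]; field_simp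
  have hr1 : 1 ≤ r := by
    rw [abs_of_neg ha2, abs_of_neg hb2] at h2
    rw [hr, le_div_iff_of_neg ha2]
    linarith
  have hr0 : 0 < r := by linarith
  have hr0' : r ≠ 0 := ne_of_gt hr0
  have hr1' : (0:ℝ) < 1 + r := by linarith
  set s : ℝ := σ₁ + σ₂ with hs
  have hτs : τ₁ + τ₂ = s / r := by
    rw [hτ₁, hτ₂, hs, hσ₁, hσ₂, hβ1, hβ2]
    field_simp
  have hκs : κ₁ + κ₂ = s / (1 + r) := by
    rw [hκ₁, hκ₂, hs, hσ₁, hσ₂]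
    have e1 : α₁ + β₁ = α₁ * (1 + r) := by rw [hβ1]; ring
    have e2 : α₂ + β₂ = α₂ * (1 + r) := by rw [hβ2]; ring
    rw [e1, e2]
    field_simp
  have hc1 : s = r * (τ₁ + τ₂) := by rw [hτs]; field_simp
  have hc2 : β₂ / (α₂ + β₂) = r / (1 + r) := by
    rw [hβ2]
    have e2 : α₂ + r * α₂ = α₂ * (1 + r) := by ring
    rw [e2]
    field_simp
  refine ⟨hc1, ?_, ?_⟩
  · rw [hκs, hc2, hτs]
    field_simp
  · have hd1 : (s / r) * r = s := div_mul_cancel₀ s hr0'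
    have hd2 : (s / (1 + r)) * (1 + r) = s := div_mul_cancel₀ s (ne_of_gt hr1')
    clear_value r s
    clear hθ h1 h2 hσ₁ hσ₂ hτ₁ hτ₂ hκ₁ hκ₂ hβ1 hβ2 hr hs hc1 hc2
    rcases lt_trichotomy s 0 with h | h | h
    · right; left
      refine ⟨?_, ?_, ?_⟩
      · rw [hκs]; exact div_neg_of_neg_of_pos h hr1'
      · rw [hκs, hτs]
        nlinarith [mul_pos hr0 hr1']
      · rw [hτs]
        nlinarith
    · right; right
      rw [hκs, hτs, h]
      norm_num
    · left
      refine ⟨?_, ?_, ?_⟩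
      · rw [hκs]; exact div_pos h hr1'
      · rw [hκs, hτs]
        nlinarith [mul_pos hr0 hr1']
      · rw [hτs]
        nlinarith
end

section
/- In the weak-migration approximation of the fully polymorphic equilibrium, the deme-1 migration load L₁ = 2(α₁(1−p̂₁) + β₁(1−q̂₁)) equals 2m₁(α₁+β₁+2ρ)/(α₁+β₁+ρ), where p̂₁ = 1 − (m₁/α₁)·(α₁+ρ)/(α₁+β₁+ρ) and q̂₁ = 1 − (m₁/β₁)·(β₁+ρ)/(α₁+β₁+ρ). Moreover, for fixed m₁ > 0, α₁ > 0, β₁ > 0, the expression 2m₁(α₁+β₁+2ρ)/(α₁+β₁+ρ) is strictly increasing in ρ on [0,∞). -/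
theorem stmt_18 (α₁ β₁ m₁ ρ : ℝ)
    (hα : α₁ > 0) (hβ : β₁ > 0) (hm₁ : m₁ > 0) (hρ : ρ ≥ 0)
    (p₁ q₁ : ℝ)
    (hp₁ : p₁ = 1 - (m₁ / α₁) * ((α₁ + ρ) / (α₁ + β₁ + ρ)))
    (hq₁ : q₁ = 1 - (m₁ / β₁) * ((β₁ + ρ) / (α₁ + β₁ + ρ))) :
    2 * (α₁ * (1 - p₁) + β₁ * (1 - q₁)) = 2 * m₁ * (α₁ + β₁ + 2 * ρ) / (α₁ + β₁ + ρ) ∧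
    StrictMonoOn (fun r : ℝ => 2 * m₁ * (α₁ + β₁ + 2 * r) / (α₁ + β₁ + r)) (Set.Ici 0) := by
  have hs : α₁ + β₁ + ρ > 0 := by linarith
  constructor
  · subst hp₁ hq₁
    field_simp
    ring
  · intro a ha b hb hab
    simp only [Set.mem_Ici] at ha hb
    have h1 : α₁ + β₁ + a > 0 := by linarith
    have h2 : α₁ + β₁ + b > 0 := by linarith
    rw [div_lt_div_iff₀ h1 h2]
    nlinarith [mul_pos hm₁ (mul_pos (show (0:ℝ) < α₁ + β₁ by linarith) (show (0:ℝ) < b - a by linarith))]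
end
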